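/- Let T ≥ 2, n ≥ 2, p ≥ 1 and λ > 0. Let x_1, …, x_n ∈ ℝ^p, let c_1, …, c_T be a simplex coding in ℝ^{T−1} and y_1, …, y_n ∈ {1, …, T}. Let X̂ ∈ ℝ^{n×p} have rows x_i^⊤, let Ŷ ∈ ℝ^{n×(T−1)} have rows c_{y_i}^⊤, let K = X̂ X̂^⊤ ∈ ℝ^{n×n}, and set 𝒦(λ) = (K + λ n I)^{−1} and C(λ) = 𝒦(λ) Ŷ. For each i, let W^{(i)} ∈ ℝ^{(T−1)×p} be the minimizer of the leave-one-out objective W ↦ ∑_{j ≠ i} ‖c_{y_j} − W x_j‖² + λ n ‖W‖_F². Then the leave-one-out prediction at x_i admits the closed form: c_{y_i} − W^{(i)} x_i = C(λ)_i / 𝒦(λ)_{ii}, where C(λ)_i ∈ ℝ^{T−1} denotes the i-th row of C(λ); equivalently, the matrix of leave-one-out predictions is f_loo^λ = Ŷ − C(λ) ⊙ M(λ), where M(λ)_{ij} = 1/𝒦(λ)_{ii} for all j and ⊙ is the Hadamard (entrywise) product. -/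

import Mathlib

open scoped RealInnerProductSpace

lemma quad_coeff_zero (B Q : ℝ) (hQ : 0 ≤ Q) (h : ∀ t : ℝ, 0 ≤ B * t + Q * t ^ 2) : B = 0 := by
  have hQ1 : 0 < Q + 1 := by linarith
  have h' := h (-B / (Q + 1))
  have heq : B * (-B / (Q + 1)) + Q * (-B / (Q + 1)) ^ 2 = -(B ^ 2) / (Q + 1) ^ 2 := by
    field_simp; ring
  rw [heq] at h'
  have hp : (0:ℝ) < (Q + 1) ^ 2 := by positivity
  have hB2 : 0 ≤ -(B ^ 2) := by
    rcases div_nonneg_iff.mp h' with ⟨h1, _⟩ | ⟨_, h2⟩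
    · exact h1
    · nlinarith
  nlinarith [sq_nonneg B]

lemma sum_sq_expand {ι : Type*} (s : Finset ι) (a b : ι → ℝ) (t : ℝ) :
    ∑ m ∈ s, (a m + t * b m) ^ 2
      = ∑ m ∈ s, (a m) ^ 2 + (2 * ∑ m ∈ s, a m * b m) * t + (∑ m ∈ s, (b m) ^ 2) * t ^ 2 := by
  rw [Finset.sum_mul, Finset.mul_sum, Finset.sum_mul, ← Finset.sum_add_distrib,
    ← Finset.sum_add_distrib]
  exact Finset.sum_congr rfl fun m _ => by ring

theorem srls_leave_one_out_closed_form
    (T n p : ℕ) (hT : 2 ≤ T) (hn : 2 ≤ n) (hp : 1 ≤ p)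
    (lam : ℝ) (hlam : 0 < lam)
    (x : Fin n → Fin p → ℝ)
    (c : Fin T → EuclideanSpace ℝ (Fin (T - 1)))
    (hnorm : ∀ y, ‖c y‖ = 1)
    (hinner : ∀ y y', y ≠ y' → ⟪c y, c y'⟫ = -(1 / ((T : ℝ) - 1)))
    (hsum : ∑ y, c y = 0)
    (y : Fin n → Fin T)
    (Xhat : Matrix (Fin n) (Fin p) ℝ) (hX : ∀ i j, Xhat i j = x i j)
    (Yhat : Matrix (Fin n) (Fin (T - 1)) ℝ) (hY : ∀ i k, Yhat i k = c (y i) k)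
    (K : Matrix (Fin n) (Fin n) ℝ) (hKdef : K = Xhat * Xhat.transpose)
    (Kl : Matrix (Fin n) (Fin n) ℝ)
    (hKl : Kl = (K + (lam * n) • (1 : Matrix (Fin n) (Fin n) ℝ))⁻¹)
    (Cl : Matrix (Fin n) (Fin (T - 1)) ℝ) (hCl : Cl = Kl * Yhat)
    (W : Fin n → Matrix (Fin (T - 1)) (Fin p) ℝ)
    (objLoo : Fin n → Matrix (Fin (T - 1)) (Fin p) ℝ → ℝ)
    (hobj : ∀ i W', objLoo i W' =
      ∑ j ∈ Finset.univ.erase i, (∑ k, (c (y j) k - W'.mulVec (x j) k) ^ 2) +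
        lam * n * ∑ k, ∑ l, (W' k l) ^ 2)
    (hmin : ∀ i W', objLoo i (W i) ≤ objLoo i W') :
    ∀ (i : Fin n) (k : Fin (T - 1)),
      c (y i) k - (W i).mulVec (x i) k = Cl i k / Kl i i := by
  -- basic positivity
  have hnpos : (0:ℝ) < n := by positivity
  have hln : (0:ℝ) < lam * n := mul_pos hlam hnpos
  set M : Matrix (Fin n) (Fin n) ℝ := K + (lam * n) • (1 : Matrix (Fin n) (Fin n) ℝ) with hM
  -- K is positive semidefinite
  have hKpsd : K.PosSemidef := by
    rw [hKdef]
    have := Matrix.posSemidef_self_mul_conjTranspose Xhat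
    rwa [Matrix.conjTranspose_eq_transpose_of_trivial] at this
  -- the scalar matrix is positive definite
  have hSpd : ((lam * n) • (1 : Matrix (Fin n) (Fin n) ℝ)).PosDef := by
    have h1 : ((lam * n) • (1 : Matrix (Fin n) (Fin n) ℝ))
        = Matrix.diagonal (fun _ => lam * n) := by
      ext a b
      by_cases h : a = b <;> simp [Matrix.one_apply, h]
    rw [h1]
    exact Matrix.PosDef.diagonal fun _ => hln
  have hMpd : M.PosDef := Matrix.PosDef.posSemidef_add hKpsd hSpd
  have hMdet : IsUnit M.det := hMpd.det_pos.ne'.isUnit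
  have hMKl : M * Kl = 1 := by rw [hKl]; exact Matrix.mul_nonsing_inv M hMdet
  have hKlM : Kl * M = 1 := by rw [hKl]; exact Matrix.nonsing_inv_mul M hMdet
  -- Kl is symmetric
  have hKsymm : K.transpose = K := by
    rw [hKdef, Matrix.transpose_mul, Matrix.transpose_transpose]
  have hMsymm : M.transpose = M := by
    rw [hM, Matrix.transpose_add, hKsymm, Matrix.transpose_smul, Matrix.transpose_one]
  have hKlsymm : ∀ a b, Kl a b = Kl b a := by
    intro a b
    have : Kl.transpose = Kl := by
      rw [hKl, Matrix.transpose_nonsing_inv, hMsymm]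
    conv_lhs => rw [← this]
    rfl
  -- diagonal of Kl is positive
  have hKlpd : Kl.PosDef := by rw [hKl]; exact hMpd.inv
  have hKlii : ∀ i, 0 < Kl i i := by
    intro i
    have h := hKlpd.diag_pos (i := i)
    simpa [dotProduct, Matrix.mulVec, Pi.single_apply, Finset.sum_ite_eq,
      Finset.sum_ite_eq', mul_comm] using h
  intro i k
  -- the prediction and residual vectors
  set v : Fin n → ℝ := fun j => (W i).mulVec (x j) k with hv
  set u : Fin n → ℝ := fun j => c (y j) k - v j with hu
  -- Step 1: stationarity
  have key : ∀ l : Fin p, lam * n * W i k l = ∑ j ∈ Finset.univ.erase i, u j * x j l := by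
    intro l
    set E := Matrix.single k l (1:ℝ) with hE
    have hmv : ∀ (t : ℝ) (j : Fin n) (m : Fin (T-1)),
        (W i + t • E).mulVec (x j) m
          = (W i).mulVec (x j) m + t * (if m = k then x j l else 0) := by
      intro t j m
      rw [Matrix.add_mulVec, Matrix.smul_mulVec]
      simp only [Pi.add_apply, Pi.smul_apply, smul_eq_mul]
      congr 1
      by_cases hkm : k = m
      · subst hkm
        simp [hE, Matrix.single, Matrix.mulVec, dotProduct, ite_and,
          Finset.sum_ite_eq]
      · simp [hE, Matrix.single, Matrix.mulVec, dotProduct, ite_and,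
          hkm, Ne.symm hkm]
    set B : ℝ := 2 * (lam * n * W i k l - ∑ j ∈ Finset.univ.erase i, u j * x j l) with hBdef
    set Q : ℝ := (∑ j ∈ Finset.univ.erase i, (x j l) ^ 2) + lam * n with hQdef
    have hQ : 0 ≤ Q := by
      have : (0:ℝ) ≤ ∑ j ∈ Finset.univ.erase i, (x j l) ^ 2 :=
        Finset.sum_nonneg fun _ _ => sq_nonneg _
      rw [hQdef]; linarith
    have hexp : ∀ t : ℝ, objLoo i (W i + t • E) = objLoo i (W i) + B * t + Q * t ^ 2 := by
      intro t
      rw [hobj, hobj]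
      have hdata : ∀ j : Fin n,
          ∑ m, (c (y j) m - (W i + t • E).mulVec (x j) m) ^ 2
            = (∑ m, (c (y j) m - (W i).mulVec (x j) m) ^ 2)
              + (2 * (-(u j * x j l))) * t + ((x j l) ^ 2) * t ^ 2 := by
        intro j
        have e1 : ∀ m, c (y j) m - (W i + t • E).mulVec (x j) m
            = (c (y j) m - (W i).mulVec (x j) m)
              + t * (-(if m = k then x j l else 0)) := by
          intro m; rw [hmv]; ring
        calc ∑ m, (c (y j) m - (W i + t • E).mulVec (x j) m) ^ 2
            = ∑ m, ((c (y j) m - (W i).mulVec (x j) m)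
                + t * (-(if m = k then x j l else 0))) ^ 2 :=
              Finset.sum_congr rfl fun m _ => by rw [e1 m]
          _ = _ := by
              rw [sum_sq_expand]
              have e2 : ∑ m, (c (y j) m - (W i).mulVec (x j) m)
                    * (-(if m = k then x j l else 0)) = -(u j * x j l) := by
                have : ∀ m, (c (y j) m - (W i).mulVec (x j) m)
                    * (-(if m = k then x j l else 0))
                    = if m = k then -((c (y j) m - (W i).mulVec (x j) m) * x j l) else 0 := by
                  intro m; split <;> simp
                rw [Finset.sum_congr rfl fun m _ => this m, Finset.sum_ite_eq']
                simp [hu, hv]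
              have e3 : ∑ m, (-(if m = k then x j l else 0)) ^ 2 = (x j l) ^ 2 := by
                have : ∀ m : Fin (T-1), (-(if m = k then x j l else 0)) ^ 2
                    = if m = k then (x j l) ^ 2 else 0 := by
                  intro m; split <;> simp
                rw [Finset.sum_congr rfl fun m _ => this m, Finset.sum_ite_eq']
                simp
              rw [e2, e3]
      have hreg : ∑ m, ∑ l', ((W i + t • E) m l') ^ 2
          = (∑ m, ∑ l', (W i m l') ^ 2) + (2 * W i k l) * t + 1 * t ^ 2 := by
        have hent : ∀ m l', (W i + t • E) m l'
            = W i m l' + t * (if m = k ∧ l' = l then 1 else 0) := by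
          intro m l'
          simp only [Pi.add_apply, Matrix.add_apply, Matrix.smul_apply, smul_eq_mul, hE,
            Matrix.single, Matrix.of_apply]
          congr 1
          by_cases h1 : m = k
          · subst h1
            by_cases h2 : l' = l
            · subst h2; simp
            · simp [h2, Ne.symm h2]
          · simp [h1, Ne.symm h1]
        have hrow : ∀ m : Fin (T-1), ∑ l', ((W i + t • E) m l') ^ 2
            = (∑ l', (W i m l') ^ 2)
              + (if m = k then 2 * W i k l * t + t ^ 2 else 0) := by
          intro m
          have e2 : ∑ l', W i m l' * (if m = k ∧ l' = l then (1:ℝ) else 0)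
              = if m = k then W i m l else 0 := by
            have h : ∀ l', W i m l' * (if m = k ∧ l' = l then (1:ℝ) else 0)
                = if l' = l then (if m = k then W i m l' else 0) else 0 := by
              intro l'; by_cases h1 : m = k <;> by_cases h2 : l' = l <;> simp [h1, h2]
            rw [Finset.sum_congr rfl fun l' _ => h l', Finset.sum_ite_eq']
            simp
          have e3 : ∑ l', (if m = k ∧ l' = l then (1:ℝ) else 0) ^ 2
              = if m = k then 1 else 0 := by
            have h : ∀ l', (if m = k ∧ l' = l then (1:ℝ) else 0) ^ 2
                = if l' = l then (if m = k then (1:ℝ) else 0) else 0 := by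
              intro l'; by_cases h1 : m = k <;> by_cases h2 : l' = l <;> simp [h1, h2]
            rw [Finset.sum_congr rfl fun l' _ => h l', Finset.sum_ite_eq']
            simp
          calc ∑ l', ((W i + t • E) m l') ^ 2
              = ∑ l', (W i m l' + t * (if m = k ∧ l' = l then 1 else 0)) ^ 2 :=
                Finset.sum_congr rfl fun l' _ => by rw [hent]
            _ = _ := by
                rw [sum_sq_expand, e2, e3]
                by_cases h1 : m = k
                · subst h1; simp only [if_true]; ring
                · simp [h1]
        rw [Finset.sum_congr rfl fun m _ => hrow m, Finset.sum_add_distrib,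
          Finset.sum_ite_eq']
        simp only [Finset.mem_univ, if_true]
        ring
      rw [Finset.sum_congr rfl fun j _ => hdata j, hreg]
      rw [Finset.sum_add_distrib, Finset.sum_add_distrib, ← Finset.sum_mul, ← Finset.sum_mul,
        Finset.sum_congr rfl (fun j _ =>
          show 2 * -(u j * x j l) = (-2) * (u j * x j l) by ring),
        ← Finset.mul_sum, hBdef, hQdef]
      ring
    have hineq : ∀ t : ℝ, 0 ≤ B * t + Q * t ^ 2 := by
      intro t
      have h := hmin i (W i + t • E)
      rw [hexp t] at h
      linarith
    have hB0 := quad_coeff_zero B Q hQ hineq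
    rw [hBdef] at hB0
    linarith
  have hKentry : ∀ a b, K a b = ∑ l, x a l * x b l := by
    intro a b
    rw [hKdef]
    simp [Matrix.mul_apply, Matrix.transpose_apply, hX]
  have hMentry : ∀ a b, M a b = K a b + lam * n * (if a = b then 1 else 0) := by
    intro a b
    simp [hM, Matrix.add_apply, Matrix.smul_apply, Matrix.one_apply]
  have hvm : ∀ m, v m = ∑ l, W i k l * x m l := by
    intro m
    simp [hv, Matrix.mulVec, dotProduct]
  have hrow : ∀ m, ∑ j, u j * M j m = lam * n * Yhat m k + u i * K i m := by
    intro m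
    have mid : ∑ j ∈ Finset.univ.erase i, u j * K j m = lam * n * v m := by
      calc ∑ j ∈ Finset.univ.erase i, u j * K j m
          = ∑ j ∈ Finset.univ.erase i, ∑ l, (u j * x j l) * x m l := by
            refine Finset.sum_congr rfl fun j _ => ?_
            rw [hKentry, Finset.mul_sum]
            exact Finset.sum_congr rfl fun l _ => by ring
        _ = ∑ l, (∑ j ∈ Finset.univ.erase i, u j * x j l) * x m l := by
            rw [Finset.sum_comm]
            exact Finset.sum_congr rfl fun l _ => by rw [Finset.sum_mul]
        _ = ∑ l, (lam * n * W i k l) * x m l := by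
            exact Finset.sum_congr rfl fun l _ => by rw [← key]
        _ = lam * n * v m := by
            rw [hvm, Finset.mul_sum]
            exact Finset.sum_congr rfl fun l _ => by ring
    calc ∑ j, u j * M j m
        = ∑ j, (u j * K j m + lam * n * (if j = m then u j else 0)) := by
          refine Finset.sum_congr rfl fun j _ => ?_
          rw [hMentry]
          split <;> ring_nf <;> simp
      _ = (∑ j, u j * K j m) + lam * n * u m := by
          rw [Finset.sum_add_distrib, ← Finset.mul_sum, Finset.sum_ite_eq']
          simp
      _ = (u i * K i m + ∑ j ∈ Finset.univ.erase i, u j * K j m) + lam * n * u m := by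
          rw [← Finset.add_sum_erase _ _ (Finset.mem_univ i)]
      _ = lam * n * Yhat m k + u i * K i m := by
          rw [mid, hY]
          simp only [hu]
          ring
  have hcol : ∀ j : Fin n, ∑ m, M j m * Kl m i = if j = i then 1 else 0 := by
    intro j
    have h := congrFun (congrFun hMKl j) i
    simpa [Matrix.mul_apply, Matrix.one_apply] using h
  have lhs : ∑ m, (∑ j, u j * M j m) * Kl m i = u i := by
    calc ∑ m, (∑ j, u j * M j m) * Kl m i
        = ∑ m, ∑ j, u j * (M j m * Kl m i) := by
          refine Finset.sum_congr rfl fun m _ => ?_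
          rw [Finset.sum_mul]
          exact Finset.sum_congr rfl fun j _ => by ring
      _ = ∑ j, u j * ∑ m, M j m * Kl m i := by
          rw [Finset.sum_comm]
          exact Finset.sum_congr rfl fun j _ => by rw [Finset.mul_sum]
      _ = u i := by
          rw [Finset.sum_congr rfl fun j _ => by rw [hcol j]]
          rw [Finset.sum_congr rfl (fun j _ => show (u j * if j = i then (1:ℝ) else 0)
            = if j = i then u j else 0 by split <;> simp), Finset.sum_ite_eq']
          simp
  have hKKl : ∑ m, K i m * Kl m i = 1 - lam * n * Kl i i := by
    have e : ∀ m, K i m * Kl m i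
        = M i m * Kl m i - lam * n * (if i = m then Kl m i else 0) := by
      intro m
      rw [hMentry]
      split <;> ring
    rw [Finset.sum_congr rfl fun m _ => e m, Finset.sum_sub_distrib, hcol i,
      ← Finset.mul_sum, Finset.sum_ite_eq]
    simp
  have hClik : Cl i k = ∑ m, Kl m i * Yhat m k := by
    rw [hCl]
    simp only [Matrix.mul_apply]
    exact Finset.sum_congr rfl fun m _ => by rw [hKlsymm i m]
  have rhs : ∑ m, (lam * n * Yhat m k + u i * K i m) * Kl m i
      = lam * n * Cl i k + u i * (1 - lam * n * Kl i i) := by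
    rw [Finset.sum_congr rfl (fun m _ => show (lam * n * Yhat m k + u i * K i m) * Kl m i
      = lam * n * (Kl m i * Yhat m k) + u i * (K i m * Kl m i) by ring),
      Finset.sum_add_distrib, ← Finset.mul_sum, ← Finset.mul_sum, hKKl, ← hClik]
  have hsum' : ∑ m, (∑ j, u j * M j m) * Kl m i
      = ∑ m, (lam * n * Yhat m k + u i * K i m) * Kl m i :=
    Finset.sum_congr rfl fun m _ => by rw [hrow m]
  have main : u i = lam * n * Cl i k + u i * (1 - lam * n * Kl i i) :=
    lhs.symm.trans (hsum'.trans rhs)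
  have huKl : u i * Kl i i = Cl i k := by
    have h0 : lam * (n:ℝ) * (Cl i k - u i * Kl i i) = 0 := by linear_combination -main
    rcases mul_eq_zero.mp h0 with h | h
    · exact absurd h hln.ne'
    · linarith
  have : u i = Cl i k / Kl i i := by
    rw [eq_div_iff (hKlii i).ne']
    exact huKl
  simpa [hu, hv] using this
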